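/- arXiv:2603.06628 — 7 statements merged into one kernel-verified Lean document; each statement's English description precedes it below -/
import Mathlib

section
/- All eigenvalues of the Jacobian J at W1, namely −1, −τ, and −(ζ+θ+ζΩ)/(1+Ω), are negative real numbers, so the spatially homogeneous equilibrium W1 is locally asymptotically stable. -/
/-- All eigenvalues of the Jacobian `J` at `W1`, namely `−1`, `−τ` and
`−(ζ+θ+ζΩ)/(1+Ω)`, are negative real numbers; hence every root of the
characteristic polynomial is negative, so `W1` is locally asymptotically
stable. -/
theorem eigenvalues_negative (β τ θ Ω ζ : ℝ)
    (hβ : 0 < β) (hτ : 0 < τ) (hθ : 0 < θ) (hΩ : 0 < Ω) (hζ : 0 < ζ) :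
    let J : Matrix (Fin 3) (Fin 3) ℝ :=
      !![-1, 0, 0;
         β, -τ, 0;
         ζ * θ * (1 + 2 * Ω) / ((1 + Ω) * (ζ + θ + ζ * Ω)), 0,
           -((ζ + θ + ζ * Ω) / (1 + Ω))]
    ((-1 : ℝ) < 0 ∧ -τ < 0 ∧ -((ζ + θ + ζ * Ω) / (1 + Ω)) < 0) ∧
    (∀ lam : ℝ,
      (J - lam • (1 : Matrix (Fin 3) (Fin 3) ℝ)).det = 0 ↔
        (lam = -1 ∨ lam = -τ ∨ lam = -((ζ + θ + ζ * Ω) / (1 + Ω)))) ∧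
    (∀ lam : ℝ,
      (J - lam • (1 : Matrix (Fin 3) (Fin 3) ℝ)).det = 0 → lam < 0) := by
  intro J
  have hc : 0 < (ζ + θ + ζ * Ω) / (1 + Ω) := by positivity
  have hdet : ∀ lam : ℝ,
      (J - lam • (1 : Matrix (Fin 3) (Fin 3) ℝ)).det
        = (-1 - lam) * (-τ - lam) * (-((ζ + θ + ζ * Ω) / (1 + Ω)) - lam) := by
    intro lam
    simp [J, Matrix.det_fin_three, Matrix.sub_apply, Matrix.smul_apply,
      Matrix.one_apply]
  refine ⟨⟨by norm_num, by linarith, by linarith⟩, ?_, ?_⟩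
  · intro lam
    rw [hdet lam]
    constructor
    · intro h
      rcases mul_eq_zero.mp h with h1 | h2
      · rcases mul_eq_zero.mp h1 with h3 | h4
        · left; linarith
        · right; left; linarith
      · right; right; linarith
    · rintro (rfl | rfl | rfl) <;> ring
  · intro lam h
    rcases mul_eq_zero.mp ((hdet lam) ▸ h) with h1 | h2
    · rcases mul_eq_zero.mp h1 with h3 | h4
      · linarith
      · linarith
    · linarith
end

section
/- The matrix J − kc²Dc, where J is the Jacobian at W1 and Dc the diffusion matrix at the critical chemotactic sensitivity ξc, has a one-dimensional kernel spanned by the vector (ρ_R, 1, ρ_E), with ρ_R = (√τ/β)(√τ + √(δ/Φ₀)) and ρ_E = ζθ√τ(1+2Ω)/(β(θ+ζ(1+Ω))²) · (√τ + √(δ/Φ₀)). -/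
/-- The matrix `J − kc²Dc` has a one-dimensional kernel spanned by
`(ρ_R, 1, ρ_E)` with `ρ_R = (√τ/β)(√τ + √(δ/Φ₀))` and
`ρ_E = ζθ√τ(1+2Ω)/(β(θ+ζ(1+Ω))²)·(√τ + √(δ/Φ₀))`. -/
theorem kernel_spanned (β τ θ Ω ζ δ Φ₀ Φ₁ : ℝ)
    (hβ : 0 < β) (hτ : 0 < τ) (hθ : 0 < θ) (hΩ : 0 < Ω) (hζ : 0 < ζ)
    (hδ : 0 < δ) (hΦ₀ : 0 < Φ₀) (hΦ₁ : 0 < Φ₁) :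
    let ξc : ℝ := (δ + τ * Φ₀ + 2 * Real.sqrt (δ * τ * Φ₀)) / (β * Φ₁)
    let kc2 : ℝ := Real.sqrt (τ / (δ * Φ₀))
    let J : Matrix (Fin 3) (Fin 3) ℝ :=
      !![-1, 0, 0;
         β, -τ, 0;
         ζ * θ * (1 + 2 * Ω) / ((1 + Ω) * (ζ + θ + ζ * Ω)), 0,
           -((ζ + θ + ζ * Ω) / (1 + Ω))]
    let Dc : Matrix (Fin 3) (Fin 3) ℝ :=
      !![Φ₀, -ξc * Φ₁, 0; 0, δ, 0; 0, 0, 0]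
    let ρR : ℝ := Real.sqrt τ / β * (Real.sqrt τ + Real.sqrt (δ / Φ₀))
    let ρE : ℝ := ζ * θ * Real.sqrt τ * (1 + 2 * Ω) /
        (β * (θ + ζ * (1 + Ω)) ^ 2) * (Real.sqrt τ + Real.sqrt (δ / Φ₀))
    let v : Fin 3 → ℝ := ![ρR, 1, ρE]
    (J - kc2 • Dc).mulVec v = 0 ∧
    (∀ w : Fin 3 → ℝ, (J - kc2 • Dc).mulVec w = 0 → ∃ c : ℝ, w = c • v) := by
  intro ξc kc2 J Dc ρR ρE v
  have hs0 : 0 < Real.sqrt τ := Real.sqrt_pos.mpr hτ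
  have hq0 : 0 < Real.sqrt (δ / Φ₀) := Real.sqrt_pos.mpr (by positivity)
  set s := Real.sqrt τ with hs_def
  set q := Real.sqrt (δ / Φ₀) with hq_def
  have hs2 : s ^ 2 = τ := Real.sq_sqrt hτ.le
  have hq2 : q ^ 2 * Φ₀ = δ := by
    have := Real.sq_sqrt (show (0:ℝ) ≤ δ / Φ₀ by positivity)
    rw [← hq_def] at this
    rw [this, div_mul_cancel₀ _ hΦ₀.ne']
  have hk : kc2 = s * q / δ := by
    have h1 : τ / (δ * Φ₀) = (s * q / δ) ^ 2 := by
      rw [div_pow, mul_pow, hs2]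
      have hq2' : q ^ 2 = δ / Φ₀ := by rw [← hq2, mul_div_cancel_right₀ _ hΦ₀.ne']
      rw [hq2']
      field_simp
    show Real.sqrt (τ / (δ * Φ₀)) = s * q / δ
    rw [h1, Real.sqrt_sq (by positivity)]
  have hsr : Real.sqrt (δ * τ * Φ₀) = s * q * Φ₀ := by
    have h1 : δ * τ * Φ₀ = (s * q * Φ₀) ^ 2 := by
      have hq2' : q ^ 2 = δ / Φ₀ := by rw [← hq2, mul_div_cancel_right₀ _ hΦ₀.ne']
      rw [mul_pow, mul_pow, hs2, hq2']
      field_simp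
    rw [h1, Real.sqrt_sq (by positivity)]
  have hden : (0:ℝ) < ζ + θ + ζ * Ω := by positivity
  have h1Ω : (0:ℝ) < 1 + Ω := by positivity
  constructor
  · funext i
    fin_cases i <;>
      simp only [J, Dc, v, ρR, ρE, ξc, Matrix.sub_apply, Matrix.of_apply, Fin.zero_eta, Fin.mk_one, Fin.reduceFinMk, Matrix.smul_apply,
        Matrix.mulVec, dotProduct, Fin.sum_univ_three, Matrix.cons_val',
        Matrix.cons_val_zero, Matrix.cons_val_one, Matrix.head_cons,
        Matrix.empty_val', Matrix.cons_val_fin_one, Matrix.head_fin_const,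
        Matrix.cons_val_two, Matrix.tail_cons, Pi.zero_apply, smul_eq_mul,
        hk, hsr, ← hs_def, ← hq_def] <;>
      simp only [← hs2, ← hq2] <;> field_simp <;> ring
  · intro w hw
    refine ⟨w 1, ?_⟩
    have e1 := congrFun hw 1
    have e2 := congrFun hw 2
    simp [J, Dc, Matrix.mulVec, dotProduct, Fin.sum_univ_three,
      Matrix.vecHead, Matrix.vecTail, hk] at e1 e2
    have hw0 : w 0 = ρR * w 1 := by
      show w 0 = s / β * (s + q) * w 1
      field_simp at e1 ⊢
      linear_combination e1 - w 1 * hs2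
    have hw2 : w 2 = ρE * w 1 := by
      have hρ : ρE = ζ * θ * s * (1 + 2 * Ω) /
          (β * (θ + ζ * (1 + Ω)) ^ 2) * (s + q) := rfl
      rw [hρ]
      rw [hw0] at e2
      have hρ2 : ρR = s / β * (s + q) := rfl
      rw [hρ2] at e2
      field_simp at e2 ⊢
      apply mul_right_cancel₀ h1Ω.ne'
      linear_combination -(1 + Ω) * e2
    funext i
    fin_cases i <;>
      simp [v, hw0, hw2, mul_comm]
end

section
/- The determinant of J − kc²Dc is zero at ξ = ξc with kc² = √(τ/(δΦ₀)); explicitly, (1 + kc²Φ₀)(kc²δ + τ) − β kc² ξc Φ₁ = 0. -/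
/-- The determinant of `J − kc²Dc` vanishes at `ξ = ξc`, `kc² = √(τ/(δΦ₀))`;
explicitly `(1 + kc²Φ₀)(kc²δ + τ) − βkc²ξcΦ₁ = 0`. -/
theorem det_vanishes_at_criticality (β τ θ Ω ζ δ Φ₀ Φ₁ : ℝ)
    (hβ : 0 < β) (hτ : 0 < τ) (hθ : 0 < θ) (hΩ : 0 < Ω) (hζ : 0 < ζ)
    (hδ : 0 < δ) (hΦ₀ : 0 < Φ₀) (hΦ₁ : 0 < Φ₁) :
    let ξc : ℝ := (δ + τ * Φ₀ + 2 * Real.sqrt (δ * τ * Φ₀)) / (β * Φ₁)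
    let kc2 : ℝ := Real.sqrt (τ / (δ * Φ₀))
    let J : Matrix (Fin 3) (Fin 3) ℝ :=
      !![-1, 0, 0;
         β, -τ, 0;
         ζ * θ * (1 + 2 * Ω) / ((1 + Ω) * (ζ + θ + ζ * Ω)), 0,
           -((ζ + θ + ζ * Ω) / (1 + Ω))]
    let Dc : Matrix (Fin 3) (Fin 3) ℝ :=
      !![Φ₀, -ξc * Φ₁, 0; 0, δ, 0; 0, 0, 0]
    (J - kc2 • Dc).det = 0 ∧
    (1 + kc2 * Φ₀) * (kc2 * δ + τ) - β * kc2 * ξc * Φ₁ = 0 := by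
  intro ξc kc2 J Dc
  have h1 : kc2 ^ 2 = τ / (δ * Φ₀) :=
    Real.sq_sqrt (by positivity)
  have h2 : kc2 * Real.sqrt (δ * τ * Φ₀) = τ := by
    rw [show kc2 = Real.sqrt (τ / (δ * Φ₀)) from rfl, ← Real.sqrt_mul (by positivity)]
    rw [show τ / (δ * Φ₀) * (δ * τ * Φ₀) = τ ^ 2 by field_simp]
    exact Real.sqrt_sq hτ.le
  have h1' : kc2 ^ 2 * (δ * Φ₀) = τ := by
    rw [h1]; field_simp
  have hc : β * kc2 * ξc * Φ₁ = kc2 * (δ + τ * Φ₀ + 2 * Real.sqrt (δ * τ * Φ₀)) := by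
    show β * kc2 * ((δ + τ * Φ₀ + 2 * Real.sqrt (δ * τ * Φ₀)) / (β * Φ₁)) * Φ₁ = _
    set s := Real.sqrt (δ * τ * Φ₀)
    field_simp
  have key : (1 + kc2 * Φ₀) * (kc2 * δ + τ) - β * kc2 * ξc * Φ₁ = 0 := by
    rw [hc]
    nlinarith [h1', h2]
  refine ⟨?_, key⟩
  have hJ : (J - kc2 • Dc).det =
      -((ζ + θ + ζ * Ω) / (1 + Ω)) *
        ((1 + kc2 * Φ₀) * (kc2 * δ + τ) - β * kc2 * ξc * Φ₁) := by
    have e00 : (J - kc2 • Dc) 0 0 = -1 - kc2 * Φ₀ := by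
      show J 0 0 - kc2 * Dc 0 0 = _; norm_num [J, Dc, Matrix.vecHead, Matrix.vecTail]
    have e01 : (J - kc2 • Dc) 0 1 = kc2 * (ξc * Φ₁) := by
      show J 0 1 - kc2 * Dc 0 1 = _; norm_num [J, Dc, Matrix.vecHead, Matrix.vecTail]
    have e02 : (J - kc2 • Dc) 0 2 = 0 := by
      show J 0 2 - kc2 * Dc 0 2 = _; norm_num [J, Dc, Matrix.vecHead, Matrix.vecTail, Matrix.cons_val_two]
    have e10 : (J - kc2 • Dc) 1 0 = β := by
      show J 1 0 - kc2 * Dc 1 0 = _; norm_num [J, Dc, Matrix.vecHead, Matrix.vecTail]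
    have e11 : (J - kc2 • Dc) 1 1 = -τ - kc2 * δ := by
      show J 1 1 - kc2 * Dc 1 1 = _; norm_num [J, Dc, Matrix.vecHead, Matrix.vecTail]
    have e12 : (J - kc2 • Dc) 1 2 = 0 := by
      show J 1 2 - kc2 * Dc 1 2 = _; norm_num [J, Dc, Matrix.vecHead, Matrix.vecTail, Matrix.cons_val_two]
    have e20 : (J - kc2 • Dc) 2 0 = ζ * θ * (1 + 2 * Ω) / ((1 + Ω) * (ζ + θ + ζ * Ω)) := by
      show J 2 0 - kc2 * Dc 2 0 = _; norm_num [J, Dc, Matrix.vecHead, Matrix.vecTail, Matrix.cons_val_two]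
    have e21 : (J - kc2 • Dc) 2 1 = 0 := by
      show J 2 1 - kc2 * Dc 2 1 = _; norm_num [J, Dc, Matrix.vecHead, Matrix.vecTail, Matrix.cons_val_two]
    have e22 : (J - kc2 • Dc) 2 2 = -((ζ + θ + ζ * Ω) / (1 + Ω)) := by
      show J 2 2 - kc2 * Dc 2 2 = _; norm_num [J, Dc, Matrix.vecHead, Matrix.vecTail, Matrix.cons_val_two]
    rw [Matrix.det_fin_three, e00, e01, e02, e10, e11, e12, e20, e21, e22]
    ring
  rw [hJ, key, mul_zero]
end

section
/- The kernel of the adjoint operator (J − kc²Dc)ᵀ is spanned by the vector (1, σ_C, 0), where σ_C = (1/β)(1 + √(τΦ₀/δ)). -/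
set_option maxHeartbeats 1000000

/-- The kernel of the adjoint `(J − kc²Dc)ᵀ` is spanned by `(1, σ_C, 0)` with
`σ_C = (1/β)(1 + √(τΦ₀/δ))`. -/
theorem adjoint_kernel_spanned (β τ θ Ω ζ δ Φ₀ Φ₁ : ℝ)
    (hβ : 0 < β) (hτ : 0 < τ) (hθ : 0 < θ) (hΩ : 0 < Ω) (hζ : 0 < ζ)
    (hδ : 0 < δ) (hΦ₀ : 0 < Φ₀) (hΦ₁ : 0 < Φ₁) :
    let ξc : ℝ := (δ + τ * Φ₀ + 2 * Real.sqrt (δ * τ * Φ₀)) / (β * Φ₁)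
    let kc2 : ℝ := Real.sqrt (τ / (δ * Φ₀))
    let J : Matrix (Fin 3) (Fin 3) ℝ :=
      !![-1, 0, 0;
         β, -τ, 0;
         ζ * θ * (1 + 2 * Ω) / ((1 + Ω) * (ζ + θ + ζ * Ω)), 0,
           -((ζ + θ + ζ * Ω) / (1 + Ω))]
    let Dc : Matrix (Fin 3) (Fin 3) ℝ :=
      !![Φ₀, -ξc * Φ₁, 0; 0, δ, 0; 0, 0, 0]
    let σC : ℝ := (1 / β) * (1 + Real.sqrt (τ * Φ₀ / δ))
    let v : Fin 3 → ℝ := ![1, σC, 0]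
    (Matrix.transpose (J - kc2 • Dc)).mulVec v = 0 ∧
    (∀ w : Fin 3 → ℝ, (Matrix.transpose (J - kc2 • Dc)).mulVec w = 0 → ∃ c : ℝ, w = c • v) := by
  intro ξc kc2 J Dc σC v
  have hβ' := hβ.ne'
  have hΦ₀' := hΦ₀.ne'
  have hδ' := hδ.ne'
  set s := Real.sqrt (τ * Φ₀ / δ) with hsdef
  have hs0 : 0 ≤ s := Real.sqrt_nonneg _
  have hs2 : s ^ 2 = τ * Φ₀ / δ := Real.sq_sqrt (by positivity)
  have hk : kc2 = s / Φ₀ := by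
    have h1 : kc2 * Φ₀ = Real.sqrt (τ / (δ * Φ₀) * Φ₀ ^ 2) := by
      rw [Real.sqrt_mul (by positivity), Real.sqrt_sq hΦ₀.le]
    have h2 : τ / (δ * Φ₀) * Φ₀ ^ 2 = τ * Φ₀ / δ := by field_simp
    have h3 : kc2 * Φ₀ = s := by rw [h1, h2]
    field_simp [← h3]; exact h3
  have hds : Real.sqrt (δ * τ * Φ₀) = δ * s := by
    rw [show δ * τ * Φ₀ = δ ^ 2 * (τ * Φ₀ / δ) by field_simp,
      Real.sqrt_mul (by positivity), Real.sqrt_sq hδ.le]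
  have hσ : σC = (1 + s) / β := by simp only [σC, ← hsdef]; ring
  have hξ : ξc = (δ + τ * Φ₀ + 2 * (δ * s)) / (β * Φ₁) := by
    simp only [ξc, hds]
  have hδs2 : δ * s ^ 2 = τ * Φ₀ := by rw [hs2]; field_simp
  clear_value s
  have key1 : -(1 + kc2 * Φ₀) + β * σC = 0 := by
    rw [hk, hσ]; field_simp; ring
  have key2 : kc2 * (ξc * Φ₁) - (τ + kc2 * δ) * σC = 0 := by
    rw [hk, hσ, hξ]; field_simp; linear_combination hδs2
  have hJ : J = !![-1, 0, 0; β, -τ, 0;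
      ζ * θ * (1 + 2 * Ω) / ((1 + Ω) * (ζ + θ + ζ * Ω)), 0,
        -((ζ + θ + ζ * Ω) / (1 + Ω))] := rfl
  have hDc : Dc = !![Φ₀, -ξc * Φ₁, 0; 0, δ, 0; 0, 0, 0] := rfl
  have hv : v = ![1, σC, 0] := rfl
  clear_value ξc kc2 J Dc σC v
  subst hJ hDc hv
  have hΩ1 : (0:ℝ) < 1 + Ω := by linarith
  have hzth : (0:ℝ) < ζ + θ + ζ * Ω := by positivity
  have hτk : 0 < τ + kc2 * δ := by
    have h4 : 0 ≤ kc2 * δ := by rw [hk]; positivity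
    linarith
  constructor
  · funext i
    fin_cases i <;>
      simp [Matrix.mulVec, dotProduct, Fin.sum_univ_three] <;>
      first
        | linear_combination key1
        | linear_combination key1 + key2
        | linear_combination key2
        | linear_combination -key2
  · intro w hw
    have h1 := congrFun hw 1
    have h2 := congrFun hw 2
    simp [Matrix.mulVec, dotProduct, Fin.sum_univ_three] at h1 h2
    have hw2 : w 2 = 0 := by
      rcases h2 with (h | h) | h
      · exact absurd h hzth.ne'
      · exact absurd h hΩ1.ne'
      · exact h
    have hw1 : w 1 = σC * w 0 := by
      have hkey : (τ + kc2 * δ) * (w 1 - σC * w 0) = 0 := by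
        linear_combination w 0 * key2 - h1
      rcases mul_eq_zero.mp hkey with h | h
      · exact absurd h hτk.ne'
      · linarith
    refine ⟨w 0, ?_⟩
    funext i
    fin_cases i <;> simp [hw1, hw2] <;> ring
end

section
/- The Jacobian of the amplitude system at the stripe equilibrium S₁ = (√(−ξ_m/s₁), 0) is the diagonal matrix diag(−2ξ_m/s₀, (s₁−s₂)ξ_m/(s₀s₁)); its trace is −(s₁+s₂)ξ_m/(s₀s₁) and its determinant is 2(s₂−s₁)ξ_m²/(s₀²s₁). -/
/-- The Jacobian of the amplitude system at the stripe equilibrium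
`S₁ = (√(−ξ_m/s₁), 0)` is `diag(−2ξ_m/s₀, (s₁−s₂)ξ_m/(s₀s₁))`, with trace
`−(s₁+s₂)ξ_m/(s₀s₁)` and determinant `2(s₂−s₁)ξ_m²/(s₀²s₁)`. -/
theorem stripe_jacobian (s₀ ξm s₁ s₂ : ℝ)
    (hs₀ : s₀ ≠ 0) (hξm : 0 < ξm) (hs₁ : s₁ < 0) :
    let ρbar : ℝ := Real.sqrt (-ξm / s₁)
    let Jm : Matrix (Fin 2) (Fin 2) ℝ :=
      !![-2 * ξm / s₀, 0; 0, (s₁ - s₂) * ξm / (s₀ * s₁)]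
    -- the entries are the partial derivatives of the amplitude vector field
    (deriv (fun x : ℝ => (ξm * x + s₁ * x ^ 3 + s₂ * (0 : ℝ) ^ 2 * x) / s₀) ρbar
        = Jm 0 0 ∧
     deriv (fun y : ℝ => (ξm * ρbar + s₁ * ρbar ^ 3 + s₂ * y ^ 2 * ρbar) / s₀) 0
        = Jm 0 1 ∧
     deriv (fun x : ℝ => (ξm * (0 : ℝ) + s₁ * (0 : ℝ) ^ 3 + s₂ * x ^ 2 * 0) / s₀)
        ρbar = Jm 1 0 ∧
     deriv (fun y : ℝ => (ξm * y + s₁ * y ^ 3 + s₂ * ρbar ^ 2 * y) / s₀) 0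
        = Jm 1 1) ∧
    Jm.trace = -((s₁ + s₂) * ξm) / (s₀ * s₁) ∧
    Jm.det = 2 * (s₂ - s₁) * ξm ^ 2 / (s₀ ^ 2 * s₁) := by
  intro ρbar Jm
  have hs₁' : s₁ ≠ 0 := ne_of_lt hs₁
  have hnn : 0 ≤ -ξm / s₁ :=
    div_nonneg_of_nonpos (by linarith) hs₁.le
  have hρ2 : ρbar ^ 2 = -ξm / s₁ := Real.sq_sqrt hnn
  have key : ∀ a b c x : ℝ,
      deriv (fun t : ℝ => (a * t + b * t ^ 3 + c * t) / s₀) x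
        = (a + b * (3 * x ^ 2) + c) / s₀ := by
    intro a b c x
    have h : HasDerivAt (fun t : ℝ => (a * t + b * t ^ 3 + c * t) / s₀)
        ((a * 1 + b * (3 * x ^ 2) + c * 1) / s₀) x := by
      have h1 : HasDerivAt (fun t : ℝ => a * t) (a * 1) x :=
        (hasDerivAt_id x).const_mul a
      have h2 : HasDerivAt (fun t : ℝ => b * t ^ 3) (b * (3 * x ^ 2)) x := by
        simpa using (hasDerivAt_pow 3 x).const_mul b
      have h3 : HasDerivAt (fun t : ℝ => c * t) (c * 1) x :=
        (hasDerivAt_id x).const_mul c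
      exact ((h1.add h2).add h3).div_const s₀
    simpa using h.deriv
  refine ⟨⟨?_, ?_, ?_, ?_⟩, ?_, ?_⟩
  · have := key ξm s₁ (s₂ * (0:ℝ)^2) ρbar
    rw [this, hρ2]
    show _ = -2 * ξm / s₀
    field_simp
    ring
  · have h : HasDerivAt (fun y : ℝ => (ξm * ρbar + s₁ * ρbar ^ 3 + s₂ * y ^ 2 * ρbar) / s₀)
        ((0 + 0 + s₂ * (2 * 0) * ρbar) / s₀) 0 := by
      have h1 : HasDerivAt (fun _ : ℝ => ξm * ρbar + s₁ * ρbar ^ 3)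
          (0 + 0 : ℝ) 0 := by simpa only [add_zero] using (hasDerivAt_const (0:ℝ) (ξm * ρbar + s₁ * ρbar ^ 3))
      have h2 : HasDerivAt (fun y : ℝ => s₂ * y ^ 2 * ρbar) (s₂ * (2 * 0) * ρbar) 0 := by
        have := ((hasDerivAt_pow 2 (0:ℝ)).const_mul s₂).mul_const ρbar
        simpa using this
      exact (h1.add h2).div_const s₀
    show _ = (0:ℝ)
    set_option linter.unnecessarySimpa false in
    simpa using h.deriv
  · show _ = (0:ℝ)
    simp
  · have := key ξm s₁ (s₂ * ρbar ^ 2) 0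
    rw [this, hρ2]
    show _ = (s₁ - s₂) * ξm / (s₀ * s₁)
    field_simp
    ring
  · show (!![-2 * ξm / s₀, 0; 0, (s₁ - s₂) * ξm / (s₀ * s₁)] : Matrix (Fin 2) (Fin 2) ℝ).trace = _
    rw [Matrix.trace_fin_two]
    show (-2 * ξm / s₀) + ((s₁ - s₂) * ξm / (s₀ * s₁)) = _
    field_simp
    ring
  · show (!![-2 * ξm / s₀, 0; 0, (s₁ - s₂) * ξm / (s₀ * s₁)] : Matrix (Fin 2) (Fin 2) ℝ).det = _
    rw [Matrix.det_fin_two_of]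
    field_simp
    ring
end

section
/- For the amplitude system with ξ_m > 0, the stripe equilibrium S₁ = (√(−ξ_m/s₁), 0) satisfies Tr < 0 and Det > 0 of its Jacobian (hence is linearly asymptotically stable) if and only if s₀ > 0 and s₂ < s₁ < 0. -/
/-- The stripe equilibrium `S₁` (which exists for `s₁ < 0`) satisfies
`Tr < 0` and `Det > 0` of its Jacobian—hence is linearly asymptotically
stable—iff `s₀ > 0` and `s₂ < s₁ < 0`. -/
theorem stripe_stability_iff (s₀ ξm s₁ s₂ : ℝ)
    (hs₀ : s₀ ≠ 0) (hs₁ : s₁ < 0) (hξm : 0 < ξm) :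
    let Tr : ℝ := -((s₁ + s₂) * ξm) / (s₀ * s₁)
    let Det : ℝ := 2 * (s₂ - s₁) * ξm ^ 2 / (s₀ ^ 2 * s₁)
    ((Tr < 0 ∧ 0 < Det) ↔ (0 < s₀ ∧ s₂ < s₁ ∧ s₁ < 0)) := by
  intro Tr Det
  have hs0sq : (0:ℝ) < s₀ ^ 2 := by positivity
  have hden : s₀ ^ 2 * s₁ < 0 := mul_neg_of_pos_of_neg hs0sq hs₁
  constructor
  · rintro ⟨hT, hD⟩
    have h21 : s₂ < s₁ := by
      rcases div_pos_iff.mp hD with ⟨_, h2⟩ | ⟨h1, _⟩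
      · linarith
      · nlinarith
    have hs0pos : 0 < s₀ := by
      have hnum : 0 < -((s₁ + s₂) * ξm) := by nlinarith
      by_contra h
      push_neg at h
      have hs0neg : s₀ < 0 := lt_of_le_of_ne h hs₀
      have hdpos : 0 < s₀ * s₁ := mul_pos_of_neg_of_neg hs0neg hs₁
      have : 0 < Tr := div_pos hnum hdpos
      linarith
    exact ⟨hs0pos, h21, hs₁⟩
  · rintro ⟨h0, h21, _⟩
    constructor
    · have hnum : 0 < -((s₁ + s₂) * ξm) := by nlinarith
      have hd : s₀ * s₁ < 0 := mul_neg_of_pos_of_neg h0 hs₁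
      exact div_neg_of_pos_of_neg hnum hd
    · have hnum : 2 * (s₂ - s₁) * ξm ^ 2 < 0 := by
        have h := mul_neg_of_neg_of_pos (by linarith : s₂ - s₁ < 0) (by positivity : (0:ℝ) < ξm ^ 2)
        linarith
      exact div_pos_of_neg_of_neg hnum hden
end

section
/- For the amplitude system with ξ_m > 0 and s₁ + s₂ < 0, the square equilibrium Q is linearly asymptotically stable (trace of Jacobian negative and determinant positive) if and only if s₀ > 0 and s₁ < −|s₂|. -/
/-- With `ξ_m > 0` and `s₁ + s₂ < 0`, the square equilibrium `Q` is linearly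
asymptotically stable (trace of its Jacobian negative and determinant
positive) iff `s₀ > 0` and `s₁ < −|s₂|`. -/
theorem square_stability_iff (s₀ ξm s₁ s₂ : ℝ)
    (hs₀ : s₀ ≠ 0) (hξm : 0 < ξm) (hsum : s₁ + s₂ < 0) :
    let Tr : ℝ := -(4 * s₁ * ξm) / (s₀ * (s₁ + s₂))
    let Det : ℝ := 4 * (s₁ - s₂) * ξm ^ 2 / (s₀ ^ 2 * (s₁ + s₂))
    ((Tr < 0 ∧ 0 < Det) ↔ (0 < s₀ ∧ s₁ < -|s₂|)) := by
  intro Tr Det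
  have hs₀sq : (0:ℝ) < s₀ ^ 2 := by positivity
  have hden2 : s₀ ^ 2 * (s₁ + s₂) < 0 := mul_neg_of_pos_of_neg hs₀sq hsum
  constructor
  · rintro ⟨hTr, hDet⟩
    have hnum : 4 * (s₁ - s₂) * ξm ^ 2 < 0 := by
      by_contra h
      push_neg at h
      have := div_nonpos_of_nonneg_of_nonpos h hden2.le
      exact absurd hDet (by simpa [Det] using this.not_gt)
    have h12 : s₁ < s₂ := by nlinarith
    have h1neg : s₁ < 0 := by linarith
    have hden1 : s₀ * (s₁ + s₂) < 0 := by
      by_contra h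
      push_neg at h
      have hnum' : 0 < -(4 * s₁ * ξm) := by nlinarith
      have hden1' : 0 < s₀ * (s₁ + s₂) := lt_of_le_of_ne h (by
        intro heq
        exact hs₀ (by
          rcases mul_eq_zero.mp heq.symm with h' | h'
          · exact h'
          · exact absurd h' hsum.ne))
      exact absurd hTr (by simpa [Tr] using (div_pos hnum' hden1').not_gt)
    have hs₀pos : 0 < s₀ := by nlinarith
    refine ⟨hs₀pos, ?_⟩
    rcases abs_cases s₂ with ⟨h, _⟩ | ⟨h, _⟩ <;> rw [h] <;> linarith
  · rintro ⟨hs₀pos, habs⟩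
    have h2 : |s₂| ≤ s₂ ∨ |s₂| ≤ -s₂ := by rcases abs_cases s₂ with ⟨h, _⟩ | ⟨h, _⟩ <;> simp [h]
    have h12 : s₁ < s₂ := lt_of_lt_of_le habs (by linarith [neg_abs_le s₂, abs_nonneg s₂])
    have h1neg : s₁ < 0 := lt_of_lt_of_le habs (by simpa using neg_nonpos_of_nonneg (abs_nonneg s₂))
    have hden1 : s₀ * (s₁ + s₂) < 0 := mul_neg_of_pos_of_neg hs₀pos hsum
    constructor
    · show -(4 * s₁ * ξm) / (s₀ * (s₁ + s₂)) < 0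
      apply div_neg_of_pos_of_neg _ hden1
      nlinarith
    · show 0 < 4 * (s₁ - s₂) * ξm ^ 2 / (s₀ ^ 2 * (s₁ + s₂))
      apply div_pos_of_neg_of_neg _ hden2
      nlinarith [mul_pos (sub_pos.mpr h12) (pow_pos hξm 2)]
end
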